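/- Fix 0 < a < b < 1, 0 < τ < τ′ and 0 < ε ≤ 1. Let F(t) = (1 − ε)Φ(t) + ε ∫ Φ(t − μ) dH(μ) be a one-sided Gaussian mixture (H a probability distribution with H((0,∞)) = 1) such that F(τ) = a and F(τ′) = b. Then the equation D(μ; τ, τ′) = (Φ(τ) − a)/(Φ(τ′) − b) has a unique solution μ* > 0, and the quantity ε* = (Φ(τ) − a)/(Φ(τ) − Φ(τ − μ*)) satisfies ε* ≤ ε. -/

import Mathlib

open MeasureTheory ProbabilityTheory Filter
open scoped Classical

noncomputable section

/-- The standard normal density. -/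
def stdPdf (x : ℝ) : ℝ := (Real.sqrt (2 * Real.pi))⁻¹ * Real.exp (-(x ^ 2) / 2)

/-- The standard normal cumulative distribution function. -/
def Phi (t : ℝ) : ℝ := ∫ x in Set.Iic t, stdPdf x

/-- `D(μ; τ, τ')`. -/
def Dfun (μ τ τ' : ℝ) : ℝ := (Phi τ - Phi (τ - μ)) / (Phi τ' - Phi (τ' - μ))

/-- Empirical cdf of a sample of size `n`. -/
def empCdf (n : ℕ) (X : Fin n → ℝ) (t : ℝ) : ℝ :=
  (n : ℝ)⁻¹ * ∑ i, if X i ≤ t then (1 : ℝ) else 0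

/-- Upper envelope `F⁺ₐ`. -/
def envP (n : ℕ) (a : ℝ) (G : ℝ → ℝ) (t : ℝ) : ℝ :=
  (2 * G t + a ^ 2 / n + (a / Real.sqrt n) * Real.sqrt (a ^ 2 / n + 4 * G t - 4 * (G t) ^ 2)) /
    (2 * (1 + a ^ 2 / n))

/-- Lower envelope `F⁻ₐ`. -/
def envM (n : ℕ) (a : ℝ) (G : ℝ → ℝ) (t : ℝ) : ℝ :=
  (2 * G t + a ^ 2 / n - (a / Real.sqrt n) * Real.sqrt (a ^ 2 / n + 4 * G t - 4 * (G t) ^ 2)) /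
    (2 * (1 + a ^ 2 / n))

/-- Grid points `t_j = (j - 1)/√(2 log n)`. -/
def gridPt (n : ℕ) (j : ℕ) : ℝ := ((j : ℝ) - 1) / Real.sqrt (2 * Real.log n)

/-- Right-hand side ratio used in the defining equation for `μ̂⁽ʲ⁾`. -/
def ratioJ (n : ℕ) (a : ℝ) (X : Fin n → ℝ) (j : ℕ) : ℝ :=
  (Phi (gridPt n j) - envP n a (empCdf n X) (gridPt n j)) /
    (Phi (gridPt n (j + 1)) - envM n a (empCdf n X) (gridPt n (j + 1)))

/-- `μ̂⁽ʲ⁾`: the solution of `D(μ; t_j, t_{j+1}) = ratio`, when it exists (else 0). -/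
def muHatJ (n : ℕ) (a : ℝ) (X : Fin n → ℝ) (j : ℕ) : ℝ :=
  if h : ∃ μ > 0, Dfun μ (gridPt n j) (gridPt n (j + 1)) = ratioJ n a X j then h.choose else 0

/-- `ε̂⁽ʲ⁾ₐ`. -/
def epsHatJ (n : ℕ) (a : ℝ) (X : Fin n → ℝ) (j : ℕ) : ℝ :=
  if ∃ μ > 0, Dfun μ (gridPt n j) (gridPt n (j + 1)) = ratioJ n a X j then
    (Phi (gridPt n j) - envP n a (empCdf n X) (gridPt n j)) /
      (Phi (gridPt n j) - Phi (gridPt n j - muHatJ n a X j))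
  else 0

/-- The grid estimator `ε̂*ₐ = max_j ε̂⁽ʲ⁾ₐ`. -/
def epsHatStar (n : ℕ) (a : ℝ) (X : Fin n → ℝ) : ℝ :=
  sSup ((fun j => epsHatJ n a X j) '' (Set.Icc 1 (Nat.ceil (2 * Real.log n))))

/-- The statistic `W_n⁺`, as a function of a uniform sample. -/
def WnPlus (n : ℕ) (U : Fin n → ℝ) : ℝ :=
  sSup ((fun t => Real.sqrt n * |empCdf n U t - t| / Real.sqrt (t * (1 - t))) ''
    (Set.Icc (1 / 2) (Phi (Real.sqrt (2 * Real.log n)))))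

/-- The statistic `Y_n`, as a function of the sample, for underlying cdf `F`. -/
def Yn (n : ℕ) (F : ℝ → ℝ) (X : Fin n → ℝ) : ℝ :=
  sSup ((fun t => Real.sqrt n * |empCdf n X t - F t| / Real.sqrt (F t * (1 - F t))) ''
    (Set.Icc 0 (Real.sqrt (2 * Real.log n))))

/-- The statistic `W_n⁺⁺(c₀)`, as a function of the sample, for underlying cdf `F`. -/
def WnPP (c0 : ℝ) (n : ℕ) (F : ℝ → ℝ) (X : Fin n → ℝ) : ℝ :=
  sSup ((fun x => Real.sqrt n * |empCdf n X x - F x| / Real.sqrt (F x * (1 - F x))) ''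
    {x : ℝ | empCdf n X 0 - Real.sqrt (c0 * Real.log n / n) ≤ F x ∧
      F x ≤ Phi (Real.sqrt (2 * Real.log n))})

/-- cdf of the two-point Gaussian mixture `(1-ε)N(0,1) + εN(μ,1)`. -/
def twoPointCdf (ε μ : ℝ) (t : ℝ) : ℝ := (1 - ε) * Phi t + ε * Phi (t - μ)

/-- cdf of the one-sided Gaussian mixture `(1-ε)N(0,1) + ε ∫ N(μ,1) dH(μ)`. -/
def oneSidedCdf (ε : ℝ) (H : Measure ℝ) (t : ℝ) : ℝ :=
  (1 - ε) * Phi t + ε * ∫ m, Phi (t - m) ∂H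

/-- cdf of the Uniform(0,1) distribution. -/
def unifCdf (t : ℝ) : ℝ := max 0 (min t 1)

/-- `X₁, …, Xₙ` are i.i.d. with cdf `F` under `P`. -/
def IIDWithCdf {Ω : Type} [MeasurableSpace Ω] (P : Measure Ω) {n : ℕ}
    (X : Fin n → Ω → ℝ) (F : ℝ → ℝ) : Prop :=
  (∀ i, Measurable (X i)) ∧ iIndepFun X P ∧
    ∀ i t, P {ω | X i ω ≤ t} = ENNReal.ofReal (F t)

/-- The event that `F` lies inside the envelope on `[0, √(2 log n)]`. -/
def EnvEvent (n : ℕ) (a : ℝ) (F : ℝ → ℝ) (X : Fin n → ℝ) : Prop :=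
  ∀ t ∈ Set.Icc (0 : ℝ) (Real.sqrt (2 * Real.log n)),
    envM n a (empCdf n X) t ≤ F t ∧ F t ≤ envP n a (empCdf n X) t

/-- The detection boundary `ρ*(β)`. -/
def rhoStar (β : ℝ) : ℝ :=
  if β ≤ 3 / 4 then β - 1 / 2 else (1 - Real.sqrt (1 - β)) ^ 2


open Set
lemma stdPdf_pos (x : ℝ) : 0 < stdPdf x := by
  unfold stdPdf; positivity

lemma continuous_stdPdf : Continuous stdPdf := by
  unfold stdPdf; continuity

lemma integrable_stdPdf : Integrable stdPdf := by
  have h : Integrable (fun x : ℝ => Real.exp (-(1/2 : ℝ) * x ^ 2)) :=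
    integrable_exp_neg_mul_sq (by norm_num)
  have := h.const_mul (Real.sqrt (2 * Real.pi))⁻¹
  refine this.congr (Eventually.of_forall fun x => ?_)
  unfold stdPdf; ring_nf

lemma Phi_sub_Phi (a b : ℝ) : Phi b - Phi a = ∫ x in a..b, stdPdf x := by
  exact intervalIntegral.integral_Iic_sub_Iic integrable_stdPdf.integrableOn integrable_stdPdf.integrableOn

lemma hasDerivAt_Phi (t : ℝ) : HasDerivAt Phi (stdPdf t) t := by
  have h : HasDerivAt (fun u => Phi 0 + ∫ x in (0:ℝ)..u, stdPdf x) (stdPdf t) t := by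
    refine (intervalIntegral.integral_hasDerivAt_right
      integrable_stdPdf.intervalIntegrable
      continuous_stdPdf.aestronglyMeasurable.stronglyMeasurableAtFilter
      continuous_stdPdf.continuousAt).const_add (Phi 0)
  refine h.congr_of_eventuallyEq (Eventually.of_forall fun u => ?_)
  show Phi u = Phi 0 + ∫ x in (0:ℝ)..u, stdPdf x
  have := Phi_sub_Phi 0 u
  linarith

lemma continuous_Phi : Continuous Phi := by
  have : Differentiable ℝ Phi := fun t => (hasDerivAt_Phi t).differentiableAt
  exact this.continuous

lemma Phi_strictMono : StrictMono Phi := by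
  intro a b hab
  have : 0 < ∫ x in a..b, stdPdf x :=
    intervalIntegral.intervalIntegral_pos_of_pos
      integrable_stdPdf.intervalIntegrable (fun x => stdPdf_pos x) hab
  have h := Phi_sub_Phi a b; linarith

lemma Phi_nonneg (t : ℝ) : 0 ≤ Phi t :=
  setIntegral_nonneg measurableSet_Iic fun x _ => (stdPdf_pos x).le

lemma Phi_pos (t : ℝ) : 0 < Phi t := by
  have h1 : Phi (t - 1) < Phi t := Phi_strictMono (by linarith)
  have := Phi_nonneg (t - 1); linarith

lemma tendsto_Phi_atBot : Tendsto Phi atBot (nhds 0) := by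
  have h : Tendsto (fun t : ℝ => ∫ x, Set.indicator (Set.Iic t) stdPdf x) atBot (nhds (∫ x : ℝ, (0:ℝ))) := by
    refine tendsto_integral_filter_of_dominated_convergence stdPdf ?_ ?_ integrable_stdPdf ?_
    · exact Eventually.of_forall fun t =>
        (continuous_stdPdf.aestronglyMeasurable).indicator measurableSet_Iic
    · refine Eventually.of_forall fun t => Eventually.of_forall fun x => ?_
      rw [Real.norm_eq_abs, abs_of_nonneg (Set.indicator_nonneg (fun y _ => (stdPdf_pos y).le) x)]
      exact Set.indicator_le_self' (fun y _ => (stdPdf_pos y).le) x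
    · refine Eventually.of_forall fun x => ?_
      have : ∀ᶠ t in atBot, Set.indicator (Set.Iic t) stdPdf x = 0 := by
        filter_upwards [eventually_lt_atBot x] with t ht
        exact Set.indicator_of_notMem (by simpa using ht.not_ge) _
      exact Tendsto.congr' (this.mono fun t ht => ht.symm) tendsto_const_nhds
  simp only [integral_zero] at h
  refine h.congr fun t => ?_
  rw [integral_indicator measurableSet_Iic]; rfl

lemma stdPdf_mul_lt {a b c d : ℝ} (h : c ^ 2 + d ^ 2 < a ^ 2 + b ^ 2) :
    stdPdf a * stdPdf b < stdPdf c * stdPdf d := by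
  unfold stdPdf
  have hpos : (0:ℝ) < ((Real.sqrt (2 * Real.pi))⁻¹) := by positivity
  calc (Real.sqrt (2 * Real.pi))⁻¹ * Real.exp (-a ^ 2 / 2) *
        ((Real.sqrt (2 * Real.pi))⁻¹ * Real.exp (-b ^ 2 / 2))
      = ((Real.sqrt (2 * Real.pi))⁻¹ * (Real.sqrt (2 * Real.pi))⁻¹) *
        Real.exp (-(a ^ 2) / 2 + -(b ^ 2) / 2) := by rw [Real.exp_add]; ring
    _ < ((Real.sqrt (2 * Real.pi))⁻¹ * (Real.sqrt (2 * Real.pi))⁻¹) *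
        Real.exp (-(c ^ 2) / 2 + -(d ^ 2) / 2) := by
        refine mul_lt_mul_of_pos_left (Real.exp_lt_exp.2 (by linarith)) (by positivity)
    _ = (Real.sqrt (2 * Real.pi))⁻¹ * Real.exp (-c ^ 2 / 2) *
        ((Real.sqrt (2 * Real.pi))⁻¹ * Real.exp (-d ^ 2 / 2)) := by rw [Real.exp_add]; ring

/-- Core MLR inequality: for `τ < τ'` and `s < u`,
`φ(τ'-s) φ(τ-u) < φ(τ'-u) φ(τ-s)`. -/
lemma core_mlr {τ τ' s u : ℝ} (h1 : τ < τ') (h2 : s < u) :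
    stdPdf (τ' - s) * stdPdf (τ - u) < stdPdf (τ' - u) * stdPdf (τ - s) := by
  apply stdPdf_mul_lt; nlinarith [mul_pos (sub_pos.2 h1) (sub_pos.2 h2)]


/-- `g(m) = Φ(τ) - Φ(τ - m)`. -/
def ggf (τ m : ℝ) : ℝ := Phi τ - Phi (τ - m)

lemma ggf_zero (τ : ℝ) : ggf τ 0 = 0 := by simp [ggf]

lemma ggf_strictMono (τ : ℝ) : StrictMono (ggf τ) := fun a b hab => by
  have := Phi_strictMono (show τ - b < τ - a by linarith)
  simp only [ggf]; linarith

lemma ggf_pos (τ : ℝ) {m : ℝ} (hm : 0 < m) : 0 < ggf τ m := by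
  have := ggf_strictMono τ hm; rwa [ggf_zero] at this

lemma ggf_lt (τ m : ℝ) : ggf τ m < Phi τ := by
  have := Phi_pos (τ - m); simp only [ggf]; linarith

lemma continuous_ggf (τ : ℝ) : Continuous (ggf τ) := by
  exact continuous_const.sub (continuous_Phi.comp (continuous_const.sub continuous_id))

lemma hasDerivAt_ggf (τ m : ℝ) : HasDerivAt (ggf τ) (stdPdf (τ - m)) m := by
  have h : HasDerivAt (fun m => Phi (τ - m)) (stdPdf (τ - m) * (0 - 1)) m :=
    (hasDerivAt_Phi (τ - m)).comp m ((hasDerivAt_const m τ).sub (hasDerivAt_id m))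
  have h2 := (hasDerivAt_const m (Phi τ)).sub h
  exact h2.congr_deriv (by ring)

lemma ggf_eq_integral (τ m : ℝ) : ggf τ m = ∫ s in (0:ℝ)..m, stdPdf (τ - s) := by
  rw [intervalIntegral.integral_comp_sub_left (fun x => stdPdf x) τ]
  simp only [sub_zero]
  exact (Phi_sub_Phi (τ - m) τ).symm ▸ rfl

lemma tendsto_ggf_atTop (τ : ℝ) : Tendsto (ggf τ) atTop (nhds (Phi τ)) := by
  have h : Tendsto (fun m : ℝ => τ - m) atTop atBot := by
    apply tendsto_atBot_add_const_left
    exact tendsto_neg_atBot_iff.mpr tendsto_id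
  have := tendsto_Phi_atBot.comp h
  exact (by simpa using tendsto_const_nhds.sub this : Tendsto (fun x => Phi τ - Phi (τ - x)) atTop (nhds (Phi τ)))

lemma Dnum {τ τ' m : ℝ} (h1 : τ < τ') (hm : 0 < m) :
    stdPdf (τ - m) * ggf τ' m < stdPdf (τ' - m) * ggf τ m := by
  rw [ggf_eq_integral, ggf_eq_integral, ← intervalIntegral.integral_const_mul,
    ← intervalIntegral.integral_const_mul]
  refine intervalIntegral.integral_lt_integral_of_continuousOn_of_le_of_exists_lt hm
    (Continuous.continuousOn (continuous_const.mul
      (continuous_stdPdf.comp (continuous_const.sub continuous_id))))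
    (Continuous.continuousOn (continuous_const.mul
      (continuous_stdPdf.comp (continuous_const.sub continuous_id))))
    (fun s hs => ?_) ⟨0, ⟨le_refl 0, hm.le⟩, ?_⟩
  · rcases eq_or_lt_of_le hs.2 with h | h
    · subst h; rw [mul_comm]
    · have := core_mlr h1 h
      linarith [this]
  · have := core_mlr h1 hm
    simpa [mul_comm] using this

lemma Dnum' {τ τ' m : ℝ} (h1 : τ < τ') (hm : 0 < m) :
    ggf τ m * stdPdf τ' < ggf τ' m * stdPdf τ := by
  rw [ggf_eq_integral, ggf_eq_integral, ← intervalIntegral.integral_mul_const,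
    ← intervalIntegral.integral_mul_const]
  refine intervalIntegral.integral_lt_integral_of_continuousOn_of_le_of_exists_lt hm
    (Continuous.continuousOn ((continuous_stdPdf.comp
      (continuous_const.sub continuous_id)).mul continuous_const))
    (Continuous.continuousOn ((continuous_stdPdf.comp
      (continuous_const.sub continuous_id)).mul continuous_const))
    (fun s hs => ?_) ⟨m, ⟨hm.le, le_refl m⟩, ?_⟩
  · have h2 : stdPdf (τ' - 0) * stdPdf (τ - s) < stdPdf (τ' - s) * stdPdf (τ - 0) :=
      core_mlr h1 hs.1
    rw [sub_zero, sub_zero] at h2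
    linarith
  · have h2 : stdPdf (τ' - 0) * stdPdf (τ - m) < stdPdf (τ' - m) * stdPdf (τ - 0) :=
      core_mlr h1 hm
    rw [sub_zero, sub_zero] at h2
    linarith

lemma hasDerivAt_D {τ τ' μ : ℝ} (hμ : 0 < μ) :
    HasDerivAt (fun μ => Dfun μ τ τ')
      ((stdPdf (τ - μ) * ggf τ' μ - ggf τ μ * stdPdf (τ' - μ)) / (ggf τ' μ)^2) μ :=
  ((hasDerivAt_ggf τ μ).div (hasDerivAt_ggf τ' μ) (ggf_pos τ' hμ).ne')

lemma continuousOn_D {τ τ' : ℝ} : ContinuousOn (fun μ => Dfun μ τ τ') (Set.Ioi 0) :=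
  ContinuousOn.div (continuous_ggf τ).continuousOn (continuous_ggf τ').continuousOn
    fun x hx => (ggf_pos τ' hx).ne'

lemma D_strictAntiOn {τ τ' : ℝ} (h1 : τ < τ') :
    StrictAntiOn (fun μ => Dfun μ τ τ') (Set.Ioi 0) := by
  refine strictAntiOn_of_deriv_neg (convex_Ioi 0) continuousOn_D ?_
  rw [interior_Ioi]
  intro μ hμ
  rw [(hasDerivAt_D (τ := τ) (τ' := τ') hμ).deriv]
  apply div_neg_of_neg_of_pos
  · have := Dnum h1 hμ; linarith
  · have := ggf_pos τ' hμ; positivity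

lemma tendsto_D_atTop {τ τ' : ℝ} :
    Tendsto (fun μ => Dfun μ τ τ') atTop (nhds (Phi τ / Phi τ')) :=
  (tendsto_ggf_atTop τ).div (tendsto_ggf_atTop τ') (Phi_pos τ').ne'

lemma D_gt_limit {τ τ' m : ℝ} (h1 : τ < τ') (hm : 0 < m) :
    Phi τ / Phi τ' < Dfun m τ τ' := by
  have h2 : Dfun (m + 1) τ τ' < Dfun m τ τ' :=
    D_strictAntiOn h1 hm (by simp; linarith) (by linarith)
  have h3 : Phi τ / Phi τ' ≤ Dfun (m + 1) τ τ' := by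
    refine le_of_tendsto tendsto_D_atTop ?_
    filter_upwards [eventually_ge_atTop (m + 1)] with μ hμ
    exact (D_strictAntiOn h1).antitoneOn (by simp; linarith) (by simp; linarith) hμ
  linarith

lemma D_lt_sup {τ τ' m : ℝ} (h1 : τ < τ') (hm : 0 < m) :
    Dfun m τ τ' < stdPdf τ / stdPdf τ' := by
  have h2 := Dnum' h1 hm
  have h3 := ggf_pos τ' hm
  have h4 := stdPdf_pos τ'
  show ggf τ m / ggf τ' m < stdPdf τ / stdPdf τ'
  rw [div_lt_div_iff₀ h3 h4]
  linarith

lemma tendsto_D_zero {τ τ' : ℝ} (h1 : τ < τ') :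
    Tendsto (fun μ => Dfun μ τ τ') (nhdsWithin 0 (Set.Ioi 0))
      (nhds (stdPdf τ / stdPdf τ')) := by
  have hmono : nhdsWithin (0:ℝ) (Set.Ioi 0) ≤ nhdsWithin 0 {oo | oo ≠ 0} :=
    nhdsWithin_mono 0 fun x hx => ne_of_gt hx
  have hslope : ∀ τ₀ : ℝ, Tendsto (fun μ => ggf τ₀ μ / μ) (nhdsWithin 0 (Set.Ioi 0))
      (nhds (stdPdf τ₀)) := by
    intro τ₀
    have h := hasDerivAt_ggf τ₀ 0
    rw [hasDerivAt_iff_tendsto_slope] at h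
    rw [sub_zero] at h
    refine Tendsto.congr (fun μ => ?_) (h.mono_left hmono)
    simp [slope, ggf_zero, div_eq_inv_mul]
  have := (hslope τ).div (hslope τ') (stdPdf_pos τ').ne'
  refine this.congr' ?_
  filter_upwards [self_mem_nhdsWithin] with μ (hμ : 0 < μ)
  have h2 : ggf τ' μ ≠ 0 := (ggf_pos τ' hμ).ne'
  have h3 : μ ≠ 0 := hμ.ne'
  show ggf τ μ / μ / (ggf τ' μ / μ) = ggf τ μ / ggf τ' μ
  rw [div_div_div_cancel_right₀ h3]

/-- Supporting line inequality: `h(m) - c g(m)` is minimized at `m = μg`,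
where `c = φ(τ'-μg)/φ(τ-μg)`. -/
lemma support_line {τ τ' μg : ℝ} (h1 : τ < τ') (m : ℝ) :
    ggf τ' μg - (stdPdf (τ' - μg) / stdPdf (τ - μg)) * ggf τ μg ≤
    ggf τ' m - (stdPdf (τ' - μg) / stdPdf (τ - μg)) * ggf τ m := by
  set c := stdPdf (τ' - μg) / stdPdf (τ - μg) with hc
  set η := fun m => ggf τ' m - c * ggf τ m with hη
  have hder : ∀ x : ℝ, HasDerivAt η (stdPdf (τ' - x) - c * stdPdf (τ - x)) x := fun x =>
    (hasDerivAt_ggf τ' x).sub ((hasDerivAt_ggf τ x).const_mul c)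
  have hcont : Continuous η := ((continuous_ggf τ').sub (continuous_const.mul (continuous_ggf τ)))
  rcases le_total m μg with hm | hm
  · -- antitone on Iic μg
    have hanti : AntitoneOn η (Set.Iic μg) := by
      refine antitoneOn_of_deriv_nonpos (convex_Iic μg) hcont.continuousOn
        (fun x _ => ((hder x).differentiableAt).differentiableWithinAt) ?_
      rw [interior_Iic]
      intro x hx
      rw [(hder x).deriv]
      have key : stdPdf (τ' - x) * stdPdf (τ - μg) ≤ stdPdf (τ' - μg) * stdPdf (τ - x) :=
        (core_mlr h1 hx).le
      have hp := stdPdf_pos (τ - μg)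
      rw [sub_nonpos, hc, div_mul_eq_mul_div, le_div_iff₀ hp]
      linarith
    exact hanti hm (Set.mem_Iic.2 le_rfl) hm
  · -- monotone on Ici μg
    have hmono : MonotoneOn η (Set.Ici μg) := by
      refine monotoneOn_of_deriv_nonneg (convex_Ici μg) hcont.continuousOn
        (fun x _ => ((hder x).differentiableAt).differentiableWithinAt) ?_
      rw [interior_Ici]
      intro x hx
      rw [(hder x).deriv]
      have key : stdPdf (τ' - μg) * stdPdf (τ - x) ≤ stdPdf (τ' - x) * stdPdf (τ - μg) :=
        (core_mlr h1 hx).le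
      have hp := stdPdf_pos (τ - μg)
      rw [sub_nonneg, hc, div_mul_eq_mul_div, div_le_iff₀ hp]
      linarith
    exact hmono (Set.mem_Ici.2 le_rfl) hm hm

lemma integral_pos_of_ae_pos {H : Measure ℝ} [IsProbabilityMeasure H] {f : ℝ → ℝ}
    (hf : Integrable f H) (hpos : ∀ᵐ m ∂H, 0 < f m) : 0 < ∫ m, f m ∂H := by
  rw [integral_pos_iff_support_of_nonneg_ae (hpos.mono fun m hm => hm.le) hf]
  have h0 : H {m | ¬ 0 < f m} = 0 := ae_iff.1 hpos
  have h1 : H (Function.support f)ᶜ = 0 := by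
    refine measure_mono_null (fun m hm => ?_) h0
    simp only [Set.mem_compl_iff, Function.mem_support, not_not] at hm
    simp [hm]
  rcases eq_or_ne (H (Function.support f)) 0 with h | h
  · exfalso
    have hcover : (Set.univ : Set ℝ) ⊆ Function.support f ∪ (Function.support f)ᶜ := by
      simp
    have h2 := (measure_mono hcover).trans (measure_union_le (μ := H) _ _)
    rw [h, h1, add_zero, measure_univ] at h2
    simp at h2
  · exact pos_iff_ne_zero.mpr h


/-- Lemma 5.1: among all one-sided Gaussian mixtures passing
through `(τ, a)` and `(τ', b)`, the two-point mixture has the smallest fraction. -/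
theorem stmt10 (a b τ τ' ε : ℝ) (ha : 0 < a) (hab : a < b) (hb : b < 1)
    (hτ : 0 < τ) (hττ' : τ < τ') (hε : 0 < ε) (hε1 : ε ≤ 1)
    (H : Measure ℝ) (hH : IsProbabilityMeasure H) (hHpos : H (Set.Ioi 0) = 1)
    (hFa : oneSidedCdf ε H τ = a) (hFb : oneSidedCdf ε H τ' = b) :
    ∃ μstar : ℝ, 0 < μstar ∧
      Dfun μstar τ τ' = (Phi τ - a) / (Phi τ' - b) ∧
      (∀ m : ℝ, 0 < m → Dfun m τ τ' = (Phi τ - a) / (Phi τ' - b) → m = μstar) ∧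
      (Phi τ - a) / (Phi τ - Phi (τ - μstar)) ≤ ε := by
  haveI := hH
  -- a.e. positivity of m
  have hae : ∀ᵐ m ∂H, 0 < m := by
    rw [ae_iff]
    have : {m : ℝ | ¬ 0 < m} = (Set.Ioi 0)ᶜ := by ext m; simp
    rw [this, measure_compl measurableSet_Ioi (measure_ne_top H _), measure_univ, hHpos,
      tsub_self]
  -- integrability
  have hint : ∀ σ : ℝ, Integrable (fun m => ggf σ m) H := by
    intro σ
    refine Integrable.mono' (integrable_const (Phi σ))
      ((continuous_ggf σ).aestronglyMeasurable) ?_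
    filter_upwards [hae] with m hm
    rw [Real.norm_eq_abs, abs_of_pos (ggf_pos σ hm)]
    exact (ggf_lt σ m).le
  have hintP : ∀ σ : ℝ, Integrable (fun m => Phi (σ - m)) H := by
    intro σ
    have := (integrable_const (Phi σ)).sub (hint σ)
    refine this.congr (Eventually.of_forall fun m => ?_)
    show Phi σ - ggf σ m = Phi (σ - m)
    simp [ggf]
  set A := ∫ m, ggf τ m ∂H with hA_def
  set B := ∫ m, ggf τ' m ∂H with hB_def
  -- relation between A, B and a, b
  have hPint : ∀ σ : ℝ, ∫ m, Phi (σ - m) ∂H = Phi σ - ∫ m, ggf σ m ∂H := by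
    intro σ
    have h1 : ∫ m, (Phi σ - ggf σ m) ∂H = Phi σ - ∫ m, ggf σ m ∂H := by
      rw [integral_sub (integrable_const _) (hint σ), integral_const, probReal_univ]
      simp
    rw [← h1]
    exact integral_congr_ae (Eventually.of_forall fun m => by simp [ggf])
  have hεA : Phi τ - a = ε * A := by
    rw [← hFa]; unfold oneSidedCdf; rw [hPint τ, ← hA_def]; ring
  have hεB : Phi τ' - b = ε * B := by
    rw [← hFb]; unfold oneSidedCdf; rw [hPint τ', ← hB_def]; ring
  -- positivity of A and B
  have hA : 0 < A :=
    integral_pos_of_ae_pos (hint τ) (by filter_upwards [hae] with m hm; exact ggf_pos τ hm)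
  have hB : 0 < B :=
    integral_pos_of_ae_pos (hint τ') (by filter_upwards [hae] with m hm; exact ggf_pos τ' hm)
  -- A < Phi τ
  have hAlt : A < Phi τ := by
    have h1 : 0 < ∫ m, Phi (τ - m) ∂H :=
      integral_pos_of_ae_pos (hintP τ) (Eventually.of_forall fun m => Phi_pos (τ - m))
    rw [hPint τ, ← hA_def] at h1; linarith
  -- strict ratio inequalities
  have hkey1 : Phi τ * B < A * Phi τ' := by
    have h1 : 0 < ∫ m, (ggf τ m * Phi τ' - ggf τ' m * Phi τ) ∂H := by
      refine integral_pos_of_ae_pos (((hint τ).mul_const _).sub ((hint τ').mul_const _)) ?_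
      filter_upwards [hae] with m hm
      have h2 := D_gt_limit hττ' hm
      have h3 : Phi τ / Phi τ' < ggf τ m / ggf τ' m := h2
      rw [div_lt_div_iff₀ (Phi_pos τ') (ggf_pos τ' hm)] at h3
      linarith
    rw [integral_sub ((hint τ).mul_const _) ((hint τ').mul_const _),
      integral_mul_const, integral_mul_const, ← hA_def, ← hB_def] at h1
    linarith
  have hkey2 : A * stdPdf τ' < stdPdf τ * B := by
    have h1 : 0 < ∫ m, (ggf τ' m * stdPdf τ - ggf τ m * stdPdf τ') ∂H := by
      refine integral_pos_of_ae_pos (((hint τ').mul_const _).sub ((hint τ).mul_const _)) ?_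
      filter_upwards [hae] with m hm
      have h2 := Dnum' hττ' hm
      linarith
    rw [integral_sub ((hint τ').mul_const _) ((hint τ).mul_const _),
      integral_mul_const, integral_mul_const, ← hA_def, ← hB_def] at h1
    linarith
  have hr1 : Phi τ / Phi τ' < A / B := by
    rw [div_lt_div_iff₀ (Phi_pos τ') hB]; linarith
  have hr2 : A / B < stdPdf τ / stdPdf τ' := by
    rw [div_lt_div_iff₀ hB (stdPdf_pos τ')]; linarith
  -- existence of μ* by IVT
  obtain ⟨m₁, hm₁D, hm₁pos⟩ :
      ∃ m₁, A / B < Dfun m₁ τ τ' ∧ m₁ ∈ Set.Ioi (0:ℝ) :=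
    (((tendsto_D_zero hττ').eventually (eventually_gt_nhds hr2)).and
      self_mem_nhdsWithin).exists
  obtain ⟨m₂, hm₂D, hm₂gt⟩ : ∃ m₂, Dfun m₂ τ τ' < A / B ∧ m₁ < m₂ :=
    ((tendsto_D_atTop.eventually (eventually_lt_nhds hr1)).and
      (eventually_gt_atTop m₁)).exists
  have hm₁pos' : (0:ℝ) < m₁ := hm₁pos
  have hsub : Set.Icc m₁ m₂ ⊆ Set.Ioi 0 := fun x hx => lt_of_lt_of_le hm₁pos' hx.1
  obtain ⟨μs, hμs_mem, hμs_eq⟩ : A / B ∈ (fun μ => Dfun μ τ τ') '' Set.Icc m₁ m₂ :=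
    intermediate_value_Icc' hm₂gt.le (continuousOn_D.mono hsub) ⟨hm₂D.le, hm₁D.le⟩
  have hμs_pos : 0 < μs := lt_of_lt_of_le hm₁pos' hμs_mem.1
  -- the ratio in the statement equals A / B
  have hratio : (Phi τ - a) / (Phi τ' - b) = A / B := by
    rw [hεA, hεB, mul_div_mul_left _ _ hε.ne']
  refine ⟨μs, hμs_pos, ?_, ?_, ?_⟩
  · rw [hratio]; exact hμs_eq
  · intro m hm hDm
    exact (D_strictAntiOn hττ').injOn hm hμs_pos (by rw [hDm, hratio]; exact hμs_eq.symm)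
  -- the fraction bound
  · -- existence of μg with ggf τ μg = A
    obtain ⟨M, hM, hM0⟩ : ∃ M, A < ggf τ M ∧ (0:ℝ) < M :=
      (((tendsto_ggf_atTop τ).eventually (eventually_gt_nhds hAlt)).and
        (eventually_gt_atTop 0)).exists
    obtain ⟨μg, hμg_mem, hμg_eq⟩ : A ∈ ggf τ '' Set.Icc 0 M := by
      apply intermediate_value_Icc hM0.le (continuous_ggf τ).continuousOn
      rw [ggf_zero]
      exact ⟨hA.le, hM.le⟩
    have hμg_pos : 0 < μg := by
      rcases eq_or_lt_of_le hμg_mem.1 with h | h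
      · exfalso; rw [← h, ggf_zero] at hμg_eq; linarith
      · exact h
    -- supporting line integrated: ggf τ' μg ≤ B
    set c := stdPdf (τ' - μg) / stdPdf (τ - μg) with hc
    have hBge : ggf τ' μg ≤ B := by
      have hre : ∫ m, (ggf τ' m - c * ggf τ m) ∂H = B - c * A := by
        rw [integral_sub (hint τ') ((hint τ).const_mul c), integral_const_mul, ← hA_def,
          ← hB_def]
      have hmono := integral_mono (μ := H) (f := fun _ => ggf τ' μg - c * ggf τ μg)
        (g := fun m => ggf τ' m - c * ggf τ m)
        (integrable_const (ggf τ' μg - c * ggf τ μg))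
        ((hint τ').sub ((hint τ).const_mul c))
        (fun m => support_line hττ' m)
      rw [integral_const, probReal_univ, hre] at hmono
      simp only [ENNReal.toReal_one, one_smul] at hmono
      rw [hμg_eq] at hmono
      linarith
    -- compare μg and μs
    have hDμg : A / B ≤ Dfun μg τ τ' := by
      have h1 : Dfun μg τ τ' = A / ggf τ' μg := by
        show ggf τ μg / ggf τ' μg = A / ggf τ' μg
        rw [hμg_eq]
      rw [h1]
      exact div_le_div_of_nonneg_left hA.le (ggf_pos τ' hμg_pos) hBge
    have hμgle : μg ≤ μs := by
      by_contra hcon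
      push_neg at hcon
      have := D_strictAntiOn hττ' hμs_pos hμg_pos hcon
      rw [hμs_eq] at this
      linarith
    have hAle : A ≤ ggf τ μs := by
      rw [← hμg_eq]
      exact (ggf_strictMono τ).monotone hμgle
    -- conclude
    have hgpos : 0 < ggf τ μs := ggf_pos τ hμs_pos
    show (Phi τ - a) / ggf τ μs ≤ ε
    rw [hεA, div_le_iff₀ hgpos]
    calc ε * A ≤ ε * ggf τ μs := mul_le_mul_of_nonneg_left hAle hε.le
      _ = ε * ggf τ μs := rfl

end
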